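/- Let B be a C*-algebra and let D be a hereditary subalgebra of B. Let (e_t)_{t∈Λ} be a net in B, indexed by a directed set Λ, such that for every t one has e_t* e_t ≤ Re(e_t) := (e_t + e_t*)/2, the real parts satisfy Re(e_t) ∈ D and Re(e_s) ≤ Re(e_t) whenever s ≤ t, and for every d ∈ D the net d* Re(e_t) d converges to d* d in the weak topology σ(B, B*). Then (e_t) acts as a contractive approximate identity for D: ‖e_t‖ ≤ 1 for all t, and ‖e_t d − d‖ → 0 and ‖d e_t − d‖ → 0 in norm for every d ∈ D. -/

import Mathlib

open scoped Pointwise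
open Filter Topology

/-- `D` is a hereditary subalgebra of the C*-algebra `B`: a norm-closed *-subalgebra such
that `0 ≤ b ≤ d` with `d ∈ D` implies `b ∈ D`. -/
def IsHereditarySubalgebra {B : Type*} [NonUnitalCStarAlgebra B] [PartialOrder B]
    [StarOrderedRing B] (D : NonUnitalStarSubalgebra ℂ B) : Prop :=
  IsClosed (D : Set B) ∧ ∀ b d : B, d ∈ D → 0 ≤ b → b ≤ d → b ∈ D

/-- The left ideal associated with a hereditary subalgebra `D` of `B`: the norm closure of
the linear span of products `b * d` with `b ∈ B`, `d ∈ D`. -/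
def leftIdealOf {B : Type*} [NonUnitalCStarAlgebra B]
    (D : NonUnitalStarSubalgebra ℂ B) : Set B :=
  closure ((Submodule.span ℂ {x : B | ∃ b : B, ∃ d ∈ D, x = b * d} : Submodule ℂ B) : Set B)


section Aux
variable {B : Type*} [NonUnitalCStarAlgebra B] [PartialOrder B] [StarOrderedRing B]

lemma rsmul_nonneg {r : ℝ} (hr : 0 ≤ r) {x : B} (hx : 0 ≤ x) : 0 ≤ r • x := by
  rw [StarOrderedRing.nonneg_iff] at hx ⊢
  induction hx using AddSubmonoid.closure_induction with
  | mem y hy =>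
    obtain ⟨z, rfl⟩ := hy
    apply AddSubmonoid.subset_closure
    refine ⟨(Real.sqrt r : ℂ) • z, ?_⟩
    show star ((Real.sqrt r : ℂ) • z) * ((Real.sqrt r : ℂ) • z) = r • (star z * z)
    rw [star_smul, smul_mul_smul_comm]
    rw [Complex.star_def, Complex.conj_ofReal, ← Complex.ofReal_mul,
      Real.mul_self_sqrt hr]
    rw [← algebraMap_smul ℂ r (star z * z)]
    rfl
  | zero => simpa using zero_mem _
  | add x y hx hy ihx ihy => simpa using add_mem ihx ihy

lemma rsmul_mono {r : ℝ} (hr : 0 ≤ r) {x y : B} (hxy : x ≤ y) : r • x ≤ r • y := by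
  rw [← sub_nonneg, ← smul_sub]
  exact rsmul_nonneg hr (sub_nonneg.mpr hxy)

lemma smul_le_self_of_le_one {r : ℝ} (hr0 : 0 ≤ r) (hr : r ≤ 1) {x : B} (hx : 0 ≤ x) :
    r • x ≤ x := by
  rw [← sub_nonneg]
  have : x - r • x = (1 - r) • x := by rw [sub_smul, one_smul]
  rw [this]
  exact rsmul_nonneg (by linarith) hx

lemma key_tendsto {Λ : Type*} [Preorder Λ] [IsDirected Λ (· ≤ ·)] [Nonempty Λ]
    (a : Λ → B) (hpos : ∀ t, 0 ≤ a t) (hanti : ∀ s t : Λ, s ≤ t → a t ≤ a s)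
    (hw : ∀ φ : B →L[ℂ] ℂ, Tendsto (fun t => φ (a t)) atTop (𝓝 0)) :
    Tendsto (fun t => ‖a t‖) atTop (𝓝 0) := by
  classical
  have hcl : (0 : B) ∈ closure (convexHull ℝ (Set.range a)) := by
    by_contra h
    obtain ⟨f, u, hu0, hu⟩ := RCLike.geometric_hahn_banach_point_closed (𝕜 := ℂ)
      ((convex_convexHull ℝ _).closure) isClosed_closure h
    have hupos : (0 : ℝ) < u := by simpa using hu0
    have h2 : Tendsto (fun t => RCLike.re (f (a t))) atTop (𝓝 0) := by
      have := (RCLike.continuous_re (K := ℂ)).tendsto (0 : ℂ) |>.comp (hw f)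
      simpa [Function.comp_def] using this
    have h3 : ∀ t, u < RCLike.re (f (a t)) := fun t =>
      hu _ (subset_closure (subset_convexHull ℝ _ ⟨t, rfl⟩))
    have := (h2.eventually_lt_const hupos).exists
    obtain ⟨t, ht⟩ := this
    exact absurd (h3 t) (not_lt.mpr ht.le)
  rw [Metric.tendsto_nhds]
  intro ε hε
  obtain ⟨x, hx, hxε⟩ := Metric.mem_closure_iff.mp hcl ε hε
  rw [convexHull_eq] at hx
  obtain ⟨ι, s, w, z, hw0, hw1, hz, rfl⟩ := hx
  choose τ hτ using hz
  obtain ⟨M, hM⟩ := Finset.exists_le (s.attach.image (fun i : {x // x ∈ s} => τ i.1 i.2))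
  rw [eventually_atTop]
  refine ⟨M, fun t ht => ?_⟩
  have hle : a t ≤ s.centerMass w z := by
    rw [Finset.centerMass_eq_of_sum_1 _ _ hw1]
    calc a t = ∑ i ∈ s, w i • a t := by rw [← Finset.sum_smul, hw1, one_smul]
    _ ≤ ∑ i ∈ s, w i • z i := by
        refine Finset.sum_le_sum fun i hi => rsmul_mono (hw0 i hi) ?_
        rw [← hτ i hi]
        refine hanti _ _ (le_trans ?_ ht)
        exact hM _ (Finset.mem_image.mpr ⟨⟨i, hi⟩, Finset.mem_attach _ _, rfl⟩)
  have : ‖a t‖ ≤ ‖s.centerMass w z‖ :=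
    CStarAlgebra.norm_le_norm_of_nonneg_of_le (hpos t) hle
  have hd : dist (0 : B) (s.centerMass w z) = ‖s.centerMass w z‖ := by
    simp [dist_eq_norm]
  rw [Real.dist_eq, sub_zero, abs_of_nonneg (norm_nonneg _)]
  calc ‖a t‖ ≤ ‖s.centerMass w z‖ := this
  _ < ε := by rwa [hd] at hxε

lemma expand_star_mul (u v : B) :
    star (u * v - v) * (u * v - v) =
      star v * (star u * u) * v - star v * (u + star u) * v + star v * v := by
  simp only [star_sub, star_mul, sub_mul, mul_sub, add_mul, mul_add, mul_assoc]
  abel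

end Aux

/-- Lemma 5.2(2) of the paper.  Let `D` be a hereditary subalgebra of a
C*-algebra `B` and `(e_t)` a net in `B` with `e_t* e_t ≤ Re e_t` (i.e. `e_t ∈ ½𝔉_B`),
whose real parts `Re e_t = (e_t + e_t*)/2` lie in `D`, increase with `t`, and satisfy
`d* (Re e_t) d → d* d` weakly for every `d ∈ D`.  Then `(e_t)` acts as a contractive
approximate identity for `D`. -/

theorem stmt_7 {B : Type*} [NonUnitalCStarAlgebra B] [PartialOrder B] [StarOrderedRing B]
    (D : NonUnitalStarSubalgebra ℂ B) (hD : IsHereditarySubalgebra D)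
    {Λ : Type*} [Preorder Λ] [IsDirected Λ (· ≤ ·)] [Nonempty Λ]
    (e : Λ → B)
    (hF : ∀ t, star (e t) * e t ≤ (2 : ℂ)⁻¹ • (e t + star (e t)))
    (hreD : ∀ t, (2 : ℂ)⁻¹ • (e t + star (e t)) ∈ D)
    (hmono : ∀ s t : Λ, s ≤ t →
      (2 : ℂ)⁻¹ • (e s + star (e s)) ≤ (2 : ℂ)⁻¹ • (e t + star (e t)))
    (hweak : ∀ d ∈ D, ∀ φ : B →L[ℂ] ℂ,
      Tendsto (fun t => φ (star d * ((2 : ℂ)⁻¹ • (e t + star (e t))) * d)) atTop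
        (𝓝 (φ (star d * d)))) :
    (∀ t, ‖e t‖ ≤ 1) ∧
    (∀ d ∈ D, Tendsto (fun t => ‖e t * d - d‖) atTop (𝓝 0)) ∧
    (∀ d ∈ D, Tendsto (fun t => ‖d * e t - d‖) atTop (𝓝 0)) := by
  set r : Λ → B := fun t => (2 : ℂ)⁻¹ • (e t + star (e t)) with hr
  -- norm bound
  have hnorm : ∀ t, ‖e t‖ ≤ 1 := by
    intro t
    have h1 : ‖star (e t) * e t‖ ≤ ‖r t‖ :=
      CStarAlgebra.norm_le_norm_of_nonneg_of_le (star_mul_self_nonneg _) (hF t)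
    have h2 : ‖r t‖ ≤ ‖e t‖ := by
      calc ‖r t‖ ≤ ‖(2 : ℂ)⁻¹‖ * ‖e t + star (e t)‖ := norm_smul_le _ _
      _ ≤ ‖(2 : ℂ)⁻¹‖ * (‖e t‖ + ‖star (e t)‖) := by
          gcongr; exact norm_add_le _ _
      _ = ‖e t‖ := by rw [norm_star]; simp; ring
    have h3 : ‖star (e t) * e t‖ = ‖e t‖ * ‖e t‖ := CStarRing.norm_star_mul_self
    nlinarith [norm_nonneg (e t), h1, h2, h3]
  have hrsa : ∀ t, IsSelfAdjoint (r t) := by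
    intro t
    rw [hr]
    simp only [IsSelfAdjoint, star_smul, star_add, star_star]
    rw [add_comm]
    congr 1
    simp [Complex.ext_iff]
  have hrnorm : ∀ t, ‖r t‖ ≤ 1 := by
    intro t
    calc ‖r t‖ ≤ ‖(2 : ℂ)⁻¹‖ * ‖e t + star (e t)‖ := norm_smul_le _ _
    _ ≤ ‖(2 : ℂ)⁻¹‖ * (‖e t‖ + ‖star (e t)‖) := by gcongr; exact norm_add_le _ _
    _ = ‖e t‖ := by rw [norm_star]; simp; ring
    _ ≤ 1 := hnorm t
  -- key convergence for a fixed d with weak hypothesis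
  have keyA : ∀ d : B,
      (∀ φ : B →L[ℂ] ℂ, Tendsto (fun t => φ (star d * r t * d)) atTop (𝓝 (φ (star d * d)))) →
      Tendsto (fun t => ‖star d * d - star d * r t * d‖) atTop (𝓝 0) := by
    intro d hwd
    refine key_tendsto _ ?_ ?_ ?_
    · intro t
      rw [sub_nonneg]
      calc star d * r t * d ≤ ‖r t‖ • (star d * d) :=
            CStarAlgebra.star_left_conjugate_le_norm_smul (hrsa t)
      _ ≤ star d * d := smul_le_self_of_le_one (norm_nonneg _) (hrnorm t)
            (star_mul_self_nonneg d)
    · intro s t hst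
      exact sub_le_sub_left (star_left_conjugate_le_conjugate (hmono s t hst) d) _
    · intro φ
      have := (tendsto_const_nhds (x := φ (star d * d))).sub (hwd φ)
      simpa [map_sub] using this
  refine ⟨hnorm, ?_, ?_⟩
  · -- left: e t * d - d
    intro d hd
    have hA := keyA d (hweak d hd)
    have hbound : ∀ t, ‖e t * d - d‖ ≤ Real.sqrt ‖star d * d - star d * r t * d‖ := by
      intro t
      apply Real.le_sqrt_of_sq_le
      have hid : star (e t * d - d) * (e t * d - d) =
          star d * (star (e t) * e t) * d - (2 : ℂ) • (star d * r t * d) + star d * d := by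
        rw [expand_star_mul]
        congr 1
        congr 1
        have h2r : e t + star (e t) = (2 : ℂ) • r t := by
          rw [hr, smul_smul]; norm_num
        rw [h2r, mul_smul_comm, smul_mul_assoc]
      have hle : star (e t * d - d) * (e t * d - d) ≤ star d * d - star d * r t * d := by
        rw [hid]
        have hX : star d * (star (e t) * e t) * d ≤ star d * r t * d :=
          star_left_conjugate_le_conjugate (hF t) d
        calc star d * (star (e t) * e t) * d - (2 : ℂ) • (star d * r t * d) + star d * d
            ≤ star d * r t * d - (2 : ℂ) • (star d * r t * d) + star d * d := by
              gcongr
        _ = star d * d - star d * r t * d := by rw [two_smul]; abel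
      calc ‖e t * d - d‖ ^ 2 = ‖star (e t * d - d) * (e t * d - d)‖ := by
            rw [CStarRing.norm_star_mul_self]; ring
      _ ≤ ‖star d * d - star d * r t * d‖ :=
            CStarAlgebra.norm_le_norm_of_nonneg_of_le (star_mul_self_nonneg _) hle
    refine squeeze_zero (fun t => norm_nonneg _) hbound ?_
    have := (Real.continuous_sqrt.tendsto 0).comp hA
    simpa [Function.comp_def] using this
  · -- right: d * e t - d
    intro d hd
    have hwd : ∀ φ : B →L[ℂ] ℂ,
        Tendsto (fun t => φ (star (star d) * r t * star d)) atTop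
          (𝓝 (φ (star (star d) * star d))) := by
      intro φ
      exact hweak (star d) (D.star_mem' hd) φ
    have hA := keyA (star d) hwd
    set v := star d with hv
    have hbound : ∀ t, ‖d * e t - d‖ ≤
        Real.sqrt (2 * ‖star v * v - star v * r t * v‖) := by
      intro t
      apply Real.le_sqrt_of_sq_le
      have hnc : ‖d * e t - d‖ = ‖star (e t) * v - v‖ := by
        rw [← norm_star]
        congr 1
        simp [hv, star_sub, star_mul]
      set u := star (e t) with hu
      have hid : star (u * v - v) * (u * v - v) =
          star v * (e t * star (e t)) * v - (2 : ℂ) • (star v * r t * v) + star v * v := by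
        have h1 : star u * u = e t * star (e t) := by rw [hu, star_star]
        have h2 : star v * (u + star u) * v = (2 : ℂ) • (star v * r t * v) := by
          have h2r : u + star u = (2 : ℂ) • r t := by
            rw [hu, star_star, add_comm, hr, smul_smul]; norm_num
          rw [h2r, mul_smul_comm, smul_mul_assoc]
        rw [expand_star_mul, h1, h2]
      have hY : star v * (e t * star (e t)) * v ≤ star v * v := by
        calc star v * (e t * star (e t)) * v ≤ ‖e t * star (e t)‖ • (star v * v) :=
              CStarAlgebra.star_left_conjugate_le_norm_smul (IsSelfAdjoint.mul_star_self (e t))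
        _ ≤ star v * v := by
            refine smul_le_self_of_le_one (norm_nonneg _) ?_ (star_mul_self_nonneg v)
            calc ‖e t * star (e t)‖ = ‖e t‖ * ‖e t‖ := CStarRing.norm_self_mul_star
            _ ≤ 1 := by nlinarith [hnorm t, norm_nonneg (e t)]
      have hle : star (u * v - v) * (u * v - v) ≤
          (star v * v - star v * r t * v) + (star v * v - star v * r t * v) := by
        rw [hid]
        calc star v * (e t * star (e t)) * v - (2 : ℂ) • (star v * r t * v) + star v * v
            ≤ star v * v - (2 : ℂ) • (star v * r t * v) + star v * v := by gcongr
        _ = (star v * v - star v * r t * v) + (star v * v - star v * r t * v) := by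
            rw [two_smul]; abel
      calc ‖d * e t - d‖ ^ 2 = ‖star (u * v - v) * (u * v - v)‖ := by
            rw [CStarRing.norm_star_mul_self, hnc]; ring
      _ ≤ ‖(star v * v - star v * r t * v) + (star v * v - star v * r t * v)‖ :=
            CStarAlgebra.norm_le_norm_of_nonneg_of_le (star_mul_self_nonneg _) hle
      _ ≤ 2 * ‖star v * v - star v * r t * v‖ := by
            have := norm_add_le (star v * v - star v * r t * v) (star v * v - star v * r t * v)
            linarith
    refine squeeze_zero (fun t => norm_nonneg _) hbound ?_
    have h2A : Tendsto (fun t => 2 * ‖star v * v - star v * r t * v‖) atTop (𝓝 0) := by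
      simpa using hA.const_mul 2
    have := (Real.continuous_sqrt.tendsto 0).comp h2A
    simpa only [Function.comp_def, Real.sqrt_zero] using this
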